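/- Fix integers 0 < n₁ ≤ n₂ ≤ … ≤ n_m. If row i of Y_n̄ contains no staircase corner (no cell (i,j) ∈ Sc_n̄), then hb(d̄)_i = 0 for every n̄-admissible composition d̄ ∈ Z_{≥0}^m. -/

import Mathlib

/-- A composition of length `nn` is encoded as a function `ℕ → ℕ` vanishing from
index `nn` on (0-based indexing).  `IsSerpentine nn d lam mu` says that
`mu ∈ Ser^nn_{d,lam}` is a `d`-serpentine associated with `lam`. -/
def IsSerpentine (nn d : ℕ) (lam mu : ℕ → ℕ) : Prop :=
  (∀ i, nn ≤ i → lam i = 0) ∧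
  (∀ i, nn ≤ i → mu i = 0) ∧
  (∀ i, lam i ≤ mu i) ∧
  (∑ i ∈ Finset.range nn, (mu i - lam i)) = d ∧
  (∀ i j, i < j → j < nn → lam i ≤ lam j → mu i ≤ lam j) ∧
  (∀ i j, i < j → j < nn → lam j < lam i → lam i ≤ mu j → mu i = lam i)

/-- `domSum f s` is the sum of the `s` largest entries of a (finitely supported)
function `f : ℕ → ℕ`, i.e. the `s`-th partial sum of the dominant part `f₊`. -/
noncomputable def domSum (f : ℕ → ℕ) (s : ℕ) : ℕ :=
  sSup ((fun T : Finset ℕ => ∑ i ∈ T, f i) '' {T : Finset ℕ | T.card ≤ s})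

/-- `f₊ = g₊`: the dominant parts (non-increasing reorderings, padded by trailing
zeros) of the finitely supported functions `f` and `g` coincide. -/
def DomEq (f g : ℕ → ℕ) : Prop := ∀ s, domSum f s = domSum g s

/-- `f₊ ≤ g₊` in the dominance order: `|f| = |g|` and every partial sum of the
dominant part of `g` is at least the corresponding one for `f`. -/
def DomLE (f g : ℕ → ℕ) : Prop :=
  (∀ s, domSum f s ≤ domSum g s) ∧ ∃ N, ∀ s, N ≤ s → domSum f s = domSum g s

/-- The composition `(λ, d)`: append the entry `d` to a length-`n` composition. -/
def appendComp (n : ℕ) (lam : ℕ → ℕ) (d : ℕ) : ℕ → ℕ :=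
  fun i => if i < n then lam i else if i = n then d else 0

/-- The composition `(d₁, …, d_m)`: truncate `d` to its first `m` entries. -/
def truncComp (m : ℕ) (d : ℕ → ℕ) : ℕ → ℕ := fun i => if i < m then d i else 0

/-- A chain of iterated serpentines `μ⁽⁰⁾ = (0)`, `μ⁽ʲ⁾ ∈ Ser^{n_j}_{d_j, μ⁽ʲ⁻¹⁾}`. -/
def SerpChain (n : ℕ → ℕ) (m : ℕ) (d : ℕ → ℕ) (μ : ℕ → ℕ → ℕ) : Prop :=
  (∀ i, μ 0 i = 0) ∧ ∀ j, j < m → IsSerpentine (n j) (d j) (μ j) (μ (j + 1))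

/-- `d̄ ∈ Z_{≥0}^m` is `n̄`-admissible: for each `s < m` the number of nonzero
entries among `d_0, …, d_s` is at most `n_s`. -/
def NAdmissible (n : ℕ → ℕ) (m : ℕ) (d : ℕ → ℕ) : Prop :=
  ∀ s, s < m → ((Finset.range (s + 1)).filter (fun j => d j ≠ 0)).card ≤ n s

/-- Cells are pairs `(i, j)` (row `i`, column `j`, both 0-based); the Young diagram
`Y_n̄` consists of the cells with `j < m` and `i < n j`.  `IsSCorner n m Rr Rc c`
says that, after removing the rows in `Rr` and the columns in `Rc` from `Y_n̄`,
the cell `c` is a corner of the remaining (renumbered) Young diagram: it is the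
lowest remaining cell of its column and the leftmost remaining cell of its row. -/
def IsSCorner (n : ℕ → ℕ) (m : ℕ) (Rr Rc : Set ℕ) (c : ℕ × ℕ) : Prop :=
  c.2 < m ∧ c.1 < n c.2 ∧ c.1 ∉ Rr ∧ c.2 ∉ Rc ∧
  (∀ i, c.1 < i → i < n c.2 → i ∈ Rr) ∧
  (∀ j, j < c.2 → j ∉ Rc → n j ≤ c.1)

/-- An execution of the thin-hook removal process on `Y_n̄`: a list of cells, each
of which is a corner of the diagram remaining after deleting the rows and columns
of the previously recorded cells, such that at the end every cell of `Y_n̄` lies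
in a removed row or in a removed column (the diagram is empty). -/
def IsExec (n : ℕ → ℕ) (m : ℕ) (l : List (ℕ × ℕ)) : Prop :=
  (∀ t (ht : t < l.length),
    IsSCorner n m {i | ∃ c ∈ l.take t, c.1 = i} {j | ∃ c ∈ l.take t, c.2 = j}
      (l.get ⟨t, ht⟩)) ∧
  (∀ i j, j < m → i < n j → (∃ c ∈ l, c.1 = i) ∨ (∃ c ∈ l, c.2 = j))

/-- `S` is the set of staircase corners of `Y_n̄`: the recorded set of some
execution of the thin-hook removal process. -/
def IsScSet (n : ℕ → ℕ) (m : ℕ) (S : Set (ℕ × ℕ)) : Prop :=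
  ∃ l : List (ℕ × ℕ), IsExec n m l ∧ S = {c | c ∈ l}

/-- The partial order on staircase corners: `(i,j) ⪯ (i',j')` iff `i ≤ i'` and
`j' ≤ j` (to increase, move down and to the left). -/
def ScLE (c c' : ℕ × ℕ) : Prop := c.1 ≤ c'.1 ∧ c'.2 ≤ c.2

/-- A DL-dense array: an array supported on the staircase corners `S` which is
order-preserving for the staircase-corner order. -/
def DLDense (S : Set (ℕ × ℕ)) (R : ℕ × ℕ → ℕ) : Prop :=
  (∀ c, c ∉ S → R c = 0) ∧ ∀ c c', c ∈ S → c' ∈ S → ScLE c c' → R c ≤ R c'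

/-- Vertical weight of an array: the sum of the entries in column `j`. -/
def vrtW (n : ℕ → ℕ) (R : ℕ × ℕ → ℕ) (j : ℕ) : ℕ := ∑ i ∈ Finset.range (n j), R (i, j)

/-- Horizontal weight of an array: the sum of the entries in row `i`. -/
def horW (m : ℕ) (R : ℕ × ℕ → ℕ) (i : ℕ) : ℕ := ∑ j ∈ Finset.range m, R (i, j)

/-- Corollary 1.23.  If row `i` of `Y_n̄` contains no staircase
corner, then `hb(d̄)_i = 0` for every `n̄`-admissible composition `d̄`.  Here
`hb(d̄) = μ⁽ᵐ⁾` for the unique chain of iterated serpentines with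
`μ⁽ᵐ⁾₊ = (d₁,…,d_m)₊`. -/
theorem hb_vanishes_on_cornerless_rows (m : ℕ) (hm : 0 < m)
    (n : ℕ → ℕ) (hn0 : 0 < n 0)
    (hmono : ∀ j k, j ≤ k → k < m → n j ≤ n k)
    (S : Set (ℕ × ℕ)) (hS : IsScSet n m S)
    (i : ℕ) (hrow : ∀ j, (i, j) ∉ S)
    (d : ℕ → ℕ) (hdsupp : ∀ j, m ≤ j → d j = 0) (hadm : NAdmissible n m d)
    (μ : ℕ → ℕ → ℕ) (hchain : SerpChain n m d μ)
    (hdom : DomEq (μ m) (truncComp m d)) :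
    μ m i = 0 := by
  classical
  by_contra hne
  obtain ⟨l, ⟨hexec1, hexec2⟩, hSl⟩ := hS
  obtain ⟨hmu0, hstep⟩ := hchain
  have hrow' : ∀ c ∈ l, c.1 ≠ i := by
    intro c hc hci
    have hmem : (i, c.2) ∈ S := by
      rw [hSl]
      have hcc : c = (i, c.2) := by
        rw [← hci]
      simpa [← hcc] using hc
    exact hrow c.2 hmem
  have htake : ∀ (t s : ℕ) (ht : t < l.length), t < s → l.get ⟨t, ht⟩ ∈ l.take s := by
    intro t s ht hts
    have h1 : t < (l.take s).length := by simp [l.length_take]; omega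
    have h2 : (l.take s)[t] = l[t] := List.getElem_take ..
    have h3 : (l.take s)[t] ∈ l.take s := List.getElem_mem h1
    simpa [h2] using h3
  -- Lemma A: for a cornerless row i, few columns cover it
  have lemA : ∀ j, j < m → i < n j →
      ((Finset.range (j+1)).filter (fun k => i < n k)).card ≤ n j - i - 1 := by
    intro j hj hij
    -- for each relevant column there is a corner in that column
    have hfind : ∀ k, k < m → i < n k →
        ∃ c, c ∈ l ∧ c.2 = k ∧ c = (l.find? (fun c => c.2 == k)).getD (0,0) := by
      intro k hk hik
      have hex : ∃ c ∈ l, c.2 = k := by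
        rcases hexec2 i k hk hik with h | h
        · obtain ⟨c, hc, hci⟩ := h
          exact absurd hci (hrow' c hc)
        · exact h
      have hex' : ∃ c ∈ l, (fun c : ℕ × ℕ => c.2 == k) c = true := by
        obtain ⟨c, hc, hck⟩ := hex
        exact ⟨c, hc, by simpa using hck⟩
      have hs : (l.find? (fun c => c.2 == k)).isSome := List.find?_isSome.mpr hex'
      obtain ⟨c, hc⟩ := Option.isSome_iff_exists.mp hs
      refine ⟨c, List.mem_of_find?_eq_some hc, by simpa using List.find?_some hc, by rw [hc]; rfl⟩
    have hcard := Finset.card_le_card_of_injOn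
      (f := fun k => ((l.find? (fun c => c.2 == k)).getD (0,0)).1)
      (s := (Finset.range (j+1)).filter (fun k => i < n k))
      (t := Finset.Ioo i (n j)) ?_ ?_
    · simpa [Nat.card_Ioo] using hcard
    · -- maps to Ioo i (n j)
      intro k hk
      simp only [Finset.mem_coe, Finset.mem_filter, Finset.mem_range] at hk
      have hkm : k < m := lt_of_lt_of_le hk.1 hj
      obtain ⟨c, hcl, hck, hcdef⟩ := hfind k hkm hk.2
      obtain ⟨t, hgt⟩ := List.mem_iff_get.mp hcl
      have hcorner := hexec1 t.1 t.2
      have hgt' : l.get ⟨t.1, t.2⟩ = c := by simpa using hgt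
      rw [hgt'] at hcorner
      obtain ⟨_, hlt, _, _, hbelow, _⟩ := hcorner
      have hne_i : c.1 ≠ i := hrow' c hcl
      have hgt_i : i < c.1 := by
        rcases lt_trichotomy c.1 i with h | h | h
        · exfalso
          have hiRr : i ∈ {i | ∃ c' ∈ l.take t.1, c'.1 = i} :=
            hbelow i h (by rw [hck]; exact hk.2)
          obtain ⟨c', hc', hc'i⟩ := hiRr
          have : c' ∈ l := (l.take_sublist t.1).subset hc'
          exact hrow' c' this hc'i
        · exact absurd h hne_i
        · exact h
      have hcn : c.1 < n j := lt_of_lt_of_le (by rwa [hck] at hlt)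
        (hmono k j (Nat.lt_succ_iff.mp hk.1) hj)
      show ((l.find? (fun c => c.2 == k)).getD (0,0)).1 ∈ Finset.Ioo i (n j)
      rw [← hcdef]
      exact Finset.mem_Ioo.mpr ⟨hgt_i, hcn⟩
    · -- injective on the filter
      have key : ∀ (t₁ t₂ : Fin l.length), t₁.1 < t₂.1 → (l.get t₂).1 ≠ (l.get t₁).1 := by
        intro t₁ t₂ hlt heq
        have hcorner := hexec1 t₂.1 t₂.2
        have hgt' : l.get ⟨t₂.1, t₂.2⟩ = l.get t₂ := by simp
        rw [hgt'] at hcorner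
        obtain ⟨_, _, hnotRr, _, _, _⟩ := hcorner
        exact hnotRr ⟨l.get t₁, htake t₁.1 t₂.1 t₁.2 hlt, heq.symm⟩
      intro k₁ hk₁ k₂ hk₂ hfeq
      by_contra hkne
      simp only [Finset.coe_filter, Set.mem_setOf_eq, Finset.mem_range] at hk₁ hk₂
      have hk₁m : k₁ < m := lt_of_lt_of_le hk₁.1 hj
      have hk₂m : k₂ < m := lt_of_lt_of_le hk₂.1 hj
      obtain ⟨c₁, hc₁l, hc₁k, hc₁def⟩ := hfind k₁ hk₁m hk₁.2
      obtain ⟨c₂, hc₂l, hc₂k, hc₂def⟩ := hfind k₂ hk₂m hk₂.2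
      simp only at hfeq
      rw [← hc₁def, ← hc₂def] at hfeq
      obtain ⟨t₁, hgt₁⟩ := List.mem_iff_get.mp hc₁l
      obtain ⟨t₂, hgt₂⟩ := List.mem_iff_get.mp hc₂l
      have hcne : c₁ ≠ c₂ := fun h => hkne (by rw [← hc₁k, ← hc₂k, h])
      have htne : t₁.1 ≠ t₂.1 := by
        intro h
        exact hcne (by rw [← hgt₁, ← hgt₂]; congr 1; exact Fin.ext h)
      rcases Nat.lt_or_ge t₁.1 t₂.1 with h | h
      · exact key t₁ t₂ h (by rw [hgt₁, hgt₂]; exact hfeq.symm)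
      · exact key t₂ t₁ (by omega) (by rw [hgt₁, hgt₂]; exact hfeq)
  -- d j must be nonzero at a step where μ changes
  have hdne : ∀ j, j < m → ∀ x, x < n j → μ j x = 0 → μ (j+1) x ≠ 0 → d j ≠ 0 := by
    intro j hj x hx h0 h1 hd0
    obtain ⟨_, _, hge, hsum, _, _⟩ := hstep j hj
    rw [hd0] at hsum
    have hz := Finset.sum_eq_zero_iff.mp hsum x (Finset.mem_range.mpr hx)
    have hgex := hge x
    omega
  -- Key invariant: support of μ j above row i is bounded by nonzero-d steps covering i
  have Q : ∀ j, j ≤ m →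
      ((Finset.range (n (m-1))).filter (fun x => i < x ∧ μ j x ≠ 0)).card
      ≤ ((Finset.range j).filter (fun k => d k ≠ 0 ∧ i < n k)).card := by
    intro j
    induction j with
    | zero =>
      intro _
      have hempty : (Finset.range (n (m-1))).filter (fun x => i < x ∧ μ 0 x ≠ 0) = ∅ := by
        apply Finset.filter_false_of_mem
        intro x _
        simp [hmu0]
      simp [hempty]
    | succ j ih =>
      intro hj1
      have hjm : j < m := hj1
      obtain ⟨hl0, hm0, hge, hsum, h3, _⟩ := hstep j hjm
      have hRmono : ((Finset.range j).filter (fun k => d k ≠ 0 ∧ i < n k)).card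
          ≤ ((Finset.range (j+1)).filter (fun k => d k ≠ 0 ∧ i < n k)).card :=
        Finset.card_le_card (Finset.filter_subset_filter _
          (Finset.range_subset_range.mpr (Nat.le_succ j)))
      by_cases hnew : ∃ x, x < n j ∧ μ j x = 0 ∧ μ (j+1) x ≠ 0 ∧ i < x
      · obtain ⟨x0, hx0n, hx00, hx01, hix0⟩ := hnew
        have hsub : (Finset.range (n (m-1))).filter (fun x => i < x ∧ μ (j+1) x ≠ 0)
            ⊆ insert x0 ((Finset.range (n (m-1))).filter (fun x => i < x ∧ μ j x ≠ 0)) := by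
          intro x hx
          simp only [Finset.mem_filter, Finset.mem_range] at hx
          by_cases hxj : μ j x = 0
          · have hxn : x < n j := by
              by_contra h
              exact hx.2.2 (hm0 x (le_of_not_gt h))
            rcases lt_trichotomy x x0 with h | h | h
            · exfalso
              have hle : μ (j+1) x ≤ μ j x0 :=
                h3 x x0 h hx0n (by rw [hxj]; exact Nat.zero_le _)
              rw [hx00] at hle
              exact hx.2.2 (Nat.le_zero.mp hle)
            · simp [h]
            · exfalso
              have hle : μ (j+1) x0 ≤ μ j x :=
                h3 x0 x h hxn (by rw [hx00]; exact Nat.zero_le _)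
              rw [hxj] at hle
              exact hx01 (Nat.le_zero.mp hle)
          · exact Finset.mem_insert_of_mem
              (Finset.mem_filter.mpr ⟨Finset.mem_range.mpr hx.1, hx.2.1, hxj⟩)
        have hc1 := le_trans (Finset.card_le_card hsub) (Finset.card_insert_le _ _)
        have hdj : d j ≠ 0 := hdne j hjm x0 hx0n hx00 hx01
        have hR : ((Finset.range (j+1)).filter (fun k => d k ≠ 0 ∧ i < n k)).card
            = ((Finset.range j).filter (fun k => d k ≠ 0 ∧ i < n k)).card + 1 := by
          rw [Finset.range_add_one, Finset.filter_insert,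
            if_pos ⟨hdj, lt_trans hix0 hx0n⟩,
            Finset.card_insert_of_notMem (by simp)]
        have hih := ih (le_of_lt hj1)
        omega
      · have hsub : (Finset.range (n (m-1))).filter (fun x => i < x ∧ μ (j+1) x ≠ 0)
            ⊆ (Finset.range (n (m-1))).filter (fun x => i < x ∧ μ j x ≠ 0) := by
          intro x hx
          simp only [Finset.mem_filter, Finset.mem_range] at hx
          refine Finset.mem_filter.mpr ⟨Finset.mem_range.mpr hx.1, hx.2.1, ?_⟩
          intro hxj
          have hxn : x < n j := by
            by_contra h
            exact hx.2.2 (hm0 x (le_of_not_gt h))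
          exact hnew ⟨x, hxn, hxj, hx.2.2, hx.2.1⟩
        exact le_trans (le_trans (Finset.card_le_card hsub) (ih (le_of_lt hj1))) hRmono
  -- find the first step where row i becomes nonzero
  have hP : ∃ j, μ j i ≠ 0 := ⟨m, hne⟩
  have hj0 : μ (Nat.find hP) i ≠ 0 := Nat.find_spec hP
  have hj0m : Nat.find hP ≤ m := Nat.find_min' hP hne
  have hj0pos : Nat.find hP ≠ 0 := by
    intro h
    rw [h] at hj0
    exact hj0 (hmu0 i)
  obtain ⟨j', hj'⟩ : ∃ j', Nat.find hP = j' + 1 := ⟨Nat.find hP - 1, by omega⟩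
  have hj'm : j' < m := by omega
  have hprev : μ j' i = 0 := by
    by_contra h
    exact Nat.find_min hP (by omega) h
  have hcur : μ (j'+1) i ≠ 0 := by rw [← hj']; exact hj0
  obtain ⟨hl0, hm0, hge, hsum, h3, _⟩ := hstep j' hj'm
  have hin : i < n j' := by
    by_contra h
    exact hcur (hm0 i (le_of_not_gt h))
  have hdj : d j' ≠ 0 := hdne j' hj'm i hin hprev hcur
  have hfull : ∀ x, i < x → x < n j' → μ j' x ≠ 0 := by
    intro x h1 h2 h0
    have hle : μ (j'+1) i ≤ μ j' x := h3 i x h1 h2 (by rw [hprev]; exact Nat.zero_le _)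
    rw [h0] at hle
    exact hcur (Nat.le_zero.mp hle)
  have hIoo : Finset.Ioo i (n j') ⊆
      (Finset.range (n (m-1))).filter (fun x => i < x ∧ μ j' x ≠ 0) := by
    intro x hx
    rw [Finset.mem_Ioo] at hx
    refine Finset.mem_filter.mpr ⟨Finset.mem_range.mpr ?_, hx.1, hfull x hx.1 hx.2⟩
    have : n j' ≤ n (m-1) := hmono j' (m-1) (by omega) (by omega)
    omega
  have hcard1 : n j' - i - 1 ≤
      ((Finset.range (n (m-1))).filter (fun x => i < x ∧ μ j' x ≠ 0)).card := by
    have := Finset.card_le_card hIoo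
    simpa [Nat.card_Ioo] using this
  have hQ := Q j' (by omega)
  have hR : ((Finset.range (j'+1)).filter (fun k => d k ≠ 0 ∧ i < n k)).card
      = ((Finset.range j').filter (fun k => d k ≠ 0 ∧ i < n k)).card + 1 := by
    rw [Finset.range_add_one, Finset.filter_insert, if_pos ⟨hdj, hin⟩,
      Finset.card_insert_of_notMem (by simp)]
  have hsub2 : ((Finset.range (j'+1)).filter (fun k => d k ≠ 0 ∧ i < n k)).card
      ≤ ((Finset.range (j'+1)).filter (fun k => i < n k)).card := by
    apply Finset.card_le_card
    intro k hk
    simp only [Finset.mem_filter, Finset.mem_range] at hk ⊢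
    exact ⟨hk.1, hk.2.2⟩
  have hA := lemA j' hj'm hin
  omega
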